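/- arXiv:2306.06127 — 2 statements merged into one kernel-verified Lean document; each statement's English description precedes it below -/
import Mathlib

section
/- Parity of the 3D WOCLCT: let f, Ψ : ℝ³ → 𝕆 be measurable with g_μ Bochner integrable for every μ ∈ ℝ³, and define Pf(t) := f(−t). Then for all ω, μ ∈ ℝ³, G(Pf, PΨ)(ω, μ) = G(f, Ψ)(−ω, −μ). -/
noncomputable section
open MeasureTheory Real

instance : MeasurableSpace (Quaternion ℝ) := borel _
instance : BorelSpace (Quaternion ℝ) := ⟨rfl⟩

/-- ℝ³ with Lebesgue measure and the Euclidean norm. -/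
abbrev R3 := EuclideanSpace ℝ (Fin 3)

/-- Cayley–Dickson model of the octonions: 𝕆 = ℍ × ℍ. -/
abbrev Octo := Quaternion ℝ × Quaternion ℝ

/-- Cayley–Dickson multiplication: (a,b) * (c,d) = (a*c − (star d)*b, d*a + b*(star c)). -/
def omul (z w : Octo) : Octo :=
  (z.1 * w.1 - star w.2 * z.2, w.2 * z.1 + z.2 * star w.1)

/-- Octonion conjugation. -/
def oconj (z : Octo) : Octo := (star z.1, -z.2)

/-- Norm-square of an octonion. -/
def Nsq (z : Octo) : ℝ := Quaternion.normSq z.1 + Quaternion.normSq z.2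

/-- Octonion norm |z| = √(N z). -/
def onorm (z : Octo) : ℝ := Real.sqrt (Nsq z)

/-- The octonion unit 1 = (1,0). -/
def oneO : Octo := (1, 0)
/-- ε₁ = (i, 0). -/
def eps1 : Octo := ((⟨0,1,0,0⟩ : Quaternion ℝ), 0)
/-- ε₂ = (j, 0). -/
def eps2 : Octo := ((⟨0,0,1,0⟩ : Quaternion ℝ), 0)
/-- ε₃ = e₄ = (0,1). -/
def eps3 : Octo := ((0 : Quaternion ℝ), (1 : Quaternion ℝ))

/-- Phase θ(t, ω) = a t²/(2b) − t ω/b + d ω²/(2b) − π/2. -/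
def phase (a b d t ω : ℝ) : ℝ :=
  a * t ^ 2 / (2 * b) - t * ω / b + d * ω ^ 2 / (2 * b) - π / 2

/-- Kernel κ(t, ω) = (2π|b|)^{−1/2} • ((cos θ) • 1 + (sin θ) • ε). -/
def kernel (a b d : ℝ) (ε : Octo) (t ω : ℝ) : Octo :=
  ((2 * π * |b|) ^ (-(1 : ℝ) / 2)) •
    (Real.cos (phase a b d t ω) • oneO + Real.sin (phase a b d t ω) • ε)

/-- The 3D octonion linear canonical transform (OCLCT). -/
def oclct (a₁ b₁ d₁ a₂ b₂ d₂ a₃ b₃ d₃ : ℝ) (h : R3 → Octo) (ω : R3) : Octo :=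
  ∫ t : R3, omul (omul (omul (h t) (kernel a₁ b₁ d₁ eps1 (t 0) (ω 0)))
      (kernel a₂ b₂ d₂ eps2 (t 1) (ω 1))) (kernel a₃ b₃ d₃ eps3 (t 2) (ω 2))

/-- The 3D windowed octonion linear canonical transform (WOCLCT):
G(f,Ψ)(ω,μ) = ℒ(t ↦ f(t) * oconj(Ψ(t−μ)))(ω). -/
def woclct (a₁ b₁ d₁ a₂ b₂ d₂ a₃ b₃ d₃ : ℝ) (f Ψ : R3 → Octo) (ω μ : R3) : Octo :=
  oclct a₁ b₁ d₁ a₂ b₂ d₂ a₃ b₃ d₃ (fun t => omul (f t) (oconj (Ψ (t - μ)))) ω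

/-- Parity of the 3D WOCLCT: G(Pf, PΨ)(ω, μ) = G(f, Ψ)(−ω, −μ) where Pf(t) = f(−t). -/
theorem woclct_parity (a₁ b₁ c₁ d₁ a₂ b₂ c₂ d₂ a₃ b₃ c₃ d₃ : ℝ)
    (hdet₁ : a₁ * d₁ - b₁ * c₁ = 1) (hdet₂ : a₂ * d₂ - b₂ * c₂ = 1)
    (hdet₃ : a₃ * d₃ - b₃ * c₃ = 1)
    (hb₁ : b₁ ≠ 0) (hb₂ : b₂ ≠ 0) (hb₃ : b₃ ≠ 0)
    (f Ψ : R3 → Octo) (hf : Measurable f) (hΨ : Measurable Ψ)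
    (hint : ∀ μ : R3, Integrable (fun t => omul (f t) (oconj (Ψ (t - μ)))))
    (ω μ : R3) :
    woclct a₁ b₁ d₁ a₂ b₂ d₂ a₃ b₃ d₃ (fun t => f (-t)) (fun t => Ψ (-t)) ω μ =
      woclct a₁ b₁ d₁ a₂ b₂ d₂ a₃ b₃ d₃ f Ψ (-ω) (-μ) := by
  have hphase : ∀ a b d t ω : ℝ, phase a b d (-t) (-ω) = phase a b d t ω := by
    intro a b d t ω; unfold phase; ring
  have hker : ∀ a b d ε t ω, kernel a b d ε (-t) (-ω) = kernel a b d ε t ω := by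
    intro a b d ε t ω; unfold kernel; rw [hphase]
  unfold woclct oclct
  rw [← MeasureTheory.integral_neg_eq_self]
  congr 1
  funext t
  have k1 := hker a₁ b₁ d₁ eps1 (t 0) (-(ω 0)); rw [neg_neg] at k1
  have k2 := hker a₂ b₂ d₂ eps2 (t 1) (-(ω 1)); rw [neg_neg] at k2
  have k3 := hker a₃ b₃ d₃ eps3 (t 2) (-(ω 2)); rw [neg_neg] at k3
  have h0 : ((-t : R3) 0) = -(t 0) := rfl
  have h1 : ((-t : R3) 1) = -(t 1) := rfl
  have h2 : ((-t : R3) 2) = -(t 2) := rfl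
  have hw0 : ((-ω : R3) 0) = -(ω 0) := rfl
  have hw1 : ((-ω : R3) 1) = -(ω 1) := rfl
  have hw2 : ((-ω : R3) 2) = -(ω 2) := rfl
  have hΨarg : (-(-t - μ) : R3) = t - -μ := by abel
  simp only [h0, h1, h2, hw0, hw1, hw2, k1, k2, k3, neg_neg, hΨarg]
end
end

section
/- Sharp Pitt's inequality for the 3D WOCLCT (conditional form): let 0 ≤ β < 3, let f, Ψ : ℝ³ → 𝕆 be measurable with g_μ Bochner integrable for every μ, ∫ |t|^β |f(t)|² dt < ∞ and ‖Ψ‖₂² < ∞, and suppose (ω,μ) ↦ G(f,Ψ)(ω,μ) is measurable. If for every μ ∈ ℝ³ the Pitt inequality ∫_{ℝ³} |ω|^{−β} |ℒg_μ(ω)|² dω ≤ (M_β / (2π |b₃| |b₁ b₂|^β)) ∫_{ℝ³} |t|^β |g_μ(t)|² dt holds, where M_β := (Γ((3−β)/4)/Γ((3+β)/4))², then ∫_{ℝ³} ∫_{ℝ³} |ω|^{−β} |G(f,Ψ)(ω,μ)|² dω dμ ≤ (M_β ‖Ψ‖₂² / (2π |b₃| |b₁ b₂|^β)) ∫_{ℝ³}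 |t|^β |f(t)|² dt. -/
noncomputable section
open MeasureTheory Real

lemma nsq_nonneg (z : Octo) : 0 ≤ Nsq z :=
  add_nonneg (Quaternion.normSq_nonneg) (Quaternion.normSq_nonneg)

lemma onorm_sq (z : Octo) : onorm z ^ 2 = Nsq z := Real.sq_sqrt (nsq_nonneg z)

lemma nsq_oconj (z : Octo) : Nsq (oconj z) = Nsq z := by
  simp [Nsq, oconj]

lemma nsq_omul (z w : Octo) : Nsq (omul z w) = Nsq z * Nsq w := by
  simp only [Nsq, omul, Quaternion.normSq_def', Quaternion.re_mul, Quaternion.imI_mul,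
    Quaternion.imJ_mul, Quaternion.imK_mul, Quaternion.re_sub, Quaternion.imI_sub,
    Quaternion.imJ_sub, Quaternion.imK_sub, Quaternion.re_add, Quaternion.imI_add,
    Quaternion.imJ_add, Quaternion.imK_add, Quaternion.re_star, Quaternion.imI_star,
    Quaternion.imJ_star, Quaternion.imK_star]
  ring

/-- Sharp Pitt's inequality for the 3D WOCLCT (conditional form). -/
theorem woclct_sharp_pitt (a₁ b₁ c₁ d₁ a₂ b₂ c₂ d₂ a₃ b₃ c₃ d₃ : ℝ)
    (hdet₁ : a₁ * d₁ - b₁ * c₁ = 1) (hdet₂ : a₂ * d₂ - b₂ * c₂ = 1)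
    (hdet₃ : a₃ * d₃ - b₃ * c₃ = 1)
    (hb₁ : b₁ ≠ 0) (hb₂ : b₂ ≠ 0) (hb₃ : b₃ ≠ 0)
    (β : ℝ) (hβ0 : 0 ≤ β) (hβ3 : β < 3)
    (f Ψ : R3 → Octo) (hf : Measurable f) (hΨ : Measurable Ψ)
    (hint : ∀ μ : R3, Integrable (fun t => omul (f t) (oconj (Ψ (t - μ)))))
    (hffin : Integrable (fun t : R3 => ‖t‖ ^ β * (onorm (f t)) ^ 2))
    (hΨfin : Integrable (fun t : R3 => Nsq (Ψ t)))
    (hGmeas : Measurable (fun p : R3 × R3 => woclct a₁ b₁ d₁ a₂ b₂ d₂ a₃ b₃ d₃ f Ψ p.1 p.2))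
    (hpitt : ∀ μ : R3,
      ∫ ω : R3, ‖ω‖ ^ (-β) *
          (onorm (oclct a₁ b₁ d₁ a₂ b₂ d₂ a₃ b₃ d₃
            (fun t => omul (f t) (oconj (Ψ (t - μ)))) ω)) ^ 2 ≤
        ((Real.Gamma ((3 - β) / 4) / Real.Gamma ((3 + β) / 4)) ^ 2 /
            (2 * π * |b₃| * |b₁ * b₂| ^ β)) *
          ∫ t : R3, ‖t‖ ^ β * (onorm (omul (f t) (oconj (Ψ (t - μ))))) ^ 2) :
    ∫ μ : R3, ∫ ω : R3,
        ‖ω‖ ^ (-β) * (onorm (woclct a₁ b₁ d₁ a₂ b₂ d₂ a₃ b₃ d₃ f Ψ ω μ)) ^ 2 ≤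
      ((Real.Gamma ((3 - β) / 4) / Real.Gamma ((3 + β) / 4)) ^ 2 * (∫ t : R3, Nsq (Ψ t)) /
          (2 * π * |b₃| * |b₁ * b₂| ^ β)) *
        ∫ t : R3, ‖t‖ ^ β * (onorm (f t)) ^ 2 := by
  classical
  open scoped Convolution in
  set M : ℝ := (Real.Gamma ((3 - β) / 4) / Real.Gamma ((3 + β) / 4)) ^ 2 with hM
  set D : ℝ := 2 * π * |b₃| * |b₁ * b₂| ^ β with hD
  have hDpos : 0 < D := by
    apply mul_pos
    apply mul_pos
    · positivity
    · exact abs_pos.mpr hb₃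
    · exact Real.rpow_pos_of_pos (abs_pos.mpr (mul_ne_zero hb₁ hb₂)) β
  have hMnn : 0 ≤ M := sq_nonneg _
  set φ : R3 → ℝ := fun t => ‖t‖ ^ β * Nsq (f t) with hφdef
  set ψ : R3 → ℝ := fun t => Nsq (Ψ t) with hψdef
  have hφint : Integrable φ := by
    refine hffin.congr ?_
    filter_upwards with t
    simp [hφdef, onorm_sq]
  have hψint : Integrable ψ := hΨfin
  set ψ' : R3 → ℝ := fun t => ψ (-t) with hψ'def
  have hψ'int : Integrable ψ' := hψint.comp_neg
  set L : ℝ →L[ℝ] ℝ →L[ℝ] ℝ := ContinuousLinearMap.mul ℝ ℝ with hL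
  have hconvint : Integrable (φ ⋆[L] ψ') := hφint.integrable_convolution L hψ'int
  have hconveq : ∀ μ : R3, (φ ⋆[L] ψ') μ = ∫ t : R3, φ t * ψ (t - μ) := by
    intro μ
    rw [convolution_def]
    refine integral_congr_ae ?_
    filter_upwards with t
    simp [hψ'def, hL, neg_sub]
  have key : ∀ μ : R3,
      (∫ ω : R3, ‖ω‖ ^ (-β) *
        (onorm (woclct a₁ b₁ d₁ a₂ b₂ d₂ a₃ b₃ d₃ f Ψ ω μ)) ^ 2) ≤
      (M / D) * (φ ⋆[L] ψ') μ := by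
    intro μ
    have h1 := hpitt μ
    have h2 : (∫ t : R3, ‖t‖ ^ β * (onorm (omul (f t) (oconj (Ψ (t - μ))))) ^ 2)
        = (φ ⋆[L] ψ') μ := by
      rw [hconveq μ]
      refine integral_congr_ae ?_
      filter_upwards with t
      rw [onorm_sq, nsq_omul, nsq_oconj]
      simp [hφdef, hψdef]; ring
    rw [h2] at h1
    exact h1
  calc ∫ μ : R3, ∫ ω : R3,
        ‖ω‖ ^ (-β) * (onorm (woclct a₁ b₁ d₁ a₂ b₂ d₂ a₃ b₃ d₃ f Ψ ω μ)) ^ 2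
      ≤ ∫ μ : R3, (M / D) * (φ ⋆[L] ψ') μ := by
        refine integral_mono_of_nonneg ?_ (hconvint.const_mul _) ?_
        · filter_upwards with μ
          refine integral_nonneg fun ω => ?_
          exact mul_nonneg (Real.rpow_nonneg (norm_nonneg _) _) (sq_nonneg _)
        · filter_upwards with μ; exact key μ
    _ = (M / D) * ((∫ t : R3, φ t) * (∫ t : R3, ψ' t)) := by
        rw [integral_const_mul, integral_convolution L hφint hψ'int]
        rfl
    _ = (M * (∫ t : R3, Nsq (Ψ t)) / D) * ∫ t : R3, ‖t‖ ^ β * (onorm (f t)) ^ 2 := by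
        have e1 : (∫ t : R3, ψ' t) = ∫ t : R3, Nsq (Ψ t) := by
          rw [hψ'def]
          exact integral_neg_eq_self ψ volume
        have e2 : (∫ t : R3, φ t) = ∫ t : R3, ‖t‖ ^ β * (onorm (f t)) ^ 2 := by
          refine integral_congr_ae ?_
          filter_upwards with t
          simp [hφdef, onorm_sq]
        rw [e1, e2]; ring
end
end
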